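/- Let n, k be integers with 1 ≤ k ≤ n, let f(x) = x^m with m ≥ 1 an integer (more generally f(x) = a_m x^m with a_m ≥ 1), and let s⃗ = (s₁,…,s_k) be a k-tuple of positive integers. If n ≥ 2, then H*_{k,f}(s⃗,n) := ∑_{1 ≤ i₁ ≤ ⋯ ≤ i_k ≤ n} ∏_{j=1}^k 1/f(i_j)^{s_j} is not an integer. -/

import Mathlib

open Finset

private lemma my_lt_sum {p : ℕ} [Fact p.Prime] {ι : Type*} {F : ι → ℚ} {S : Finset ι}
    (hS : S.Nonempty) {c : ℤ} (hF : ∀ i ∈ S, c < padicValRat p (F i))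
    (hpos : ∀ i ∈ S, 0 < F i) : c < padicValRat p (∑ i ∈ S, F i) := by
  induction hS using Finset.Nonempty.cons_induction with
  | singleton i => simpa using hF i (by simp)
  | cons a s ha hs ih =>
    rw [Finset.sum_cons]
    have h1 : c < padicValRat p (F a) := hF a (Finset.mem_cons_self _ _)
    have h2 : c < padicValRat p (∑ i ∈ s, F i) :=
      ih (fun i hi => hF i (Finset.mem_cons.2 (Or.inr hi)))
        (fun i hi => hpos i (Finset.mem_cons.2 (Or.inr hi)))
    have hpos' : 0 < F a + ∑ i ∈ s, F i :=
      add_pos (hpos a (Finset.mem_cons_self _ _))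
        (Finset.sum_pos (fun i hi => hpos i (Finset.mem_cons.2 (Or.inr hi))) hs)
    exact lt_of_lt_of_le (lt_min h1 h2) (padicValRat.min_le_padicValRat_add hpos'.ne')

private lemma my_prod_val {p : ℕ} [Fact p.Prime] {ι : Type*} (S : Finset ι) (F : ι → ℚ)
    (h : ∀ i ∈ S, F i ≠ 0) :
    padicValRat p (∏ i ∈ S, F i) = ∑ i ∈ S, padicValRat p (F i) := by
  induction S using Finset.cons_induction with
  | empty => simp
  | cons a s ha ih =>
    rw [Finset.prod_cons, Finset.sum_cons,
      padicValRat.mul (h a (Finset.mem_cons_self _ _))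
        (Finset.prod_ne_zero_iff.2 fun i hi => h i (Finset.mem_cons.2 (Or.inr hi))),
      ih (fun i hi => h i (Finset.mem_cons.2 (Or.inr hi)))]

/-- Multiple harmonic star sum with exponents for the monomial `f(x) = a_m x^m`. -/
noncomputable def HstarMono (aₘ : ℤ) (m k n : ℕ) (s : Fin k → ℕ) : ℚ :=
  ∑ i ∈ (Fintype.piFinset fun _ : Fin k => Finset.Icc 1 n).filter
      (fun i => ∀ a b : Fin k, a ≤ b → i a ≤ i b),
    ∏ j : Fin k, (1 : ℚ) / (((aₘ : ℚ) * ((i j : ℕ) : ℚ) ^ m) ^ (s j))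

theorem stmt14 (aₘ : ℤ) (ha : 1 ≤ aₘ) (m : ℕ) (hm : 1 ≤ m) (k n : ℕ)
    (hk : 1 ≤ k) (hkn : k ≤ n) (hn : 2 ≤ n) (s : Fin k → ℕ) (hs : ∀ j, 1 ≤ s j) :
    ¬ ∃ z : ℤ, HstarMono aₘ m k n s = (z : ℚ) := by
  rintro ⟨z, hz⟩
  obtain ⟨p, hp, hlt, hle⟩ := Nat.exists_prime_lt_and_le_two_mul (n / 2) (by omega)
  haveI : Fact p.Prime := ⟨hp⟩
  have hpn : p ≤ n := by omega
  have h2p : n < 2 * p := by omega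
  have haQ : (aₘ : ℚ) ≠ 0 := by positivity
  set va : ℤ := (padicValInt p aₘ : ℤ) with hva
  have hva0 : 0 ≤ va := Int.natCast_nonneg _
  set T := (Fintype.piFinset fun _ : Fin k => Finset.Icc 1 n).filter
      (fun i => ∀ a b : Fin k, a ≤ b → i a ≤ i b) with hT
  set F : (Fin k → ℕ) → ℚ := fun i =>
    ∏ j : Fin k, (1 : ℚ) / (((aₘ : ℚ) * ((i j : ℕ) : ℚ) ^ m) ^ (s j)) with hF
  -- c in [1, n] divisible by p iff c = p
  have hvnat : ∀ c : ℕ, 1 ≤ c → c ≤ n →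
      (padicValNat p c : ℤ) = if c = p then 1 else 0 := by
    intro c h1 h2
    split_ifs with h
    · subst h; rw [padicValNat.self hp.one_lt]; norm_num
    · have hnd : ¬ p ∣ c := by
        rintro ⟨t, rfl⟩
        have hp2 := hp.two_le
        have ht2 : t < 2 := lt_of_mul_lt_mul_left (by omega : p * t < p * 2) (Nat.zero_le p)
        have ht1 : 1 ≤ t := Nat.pos_of_ne_zero fun h0 => by subst h0; simp at h1
        have ht : t = 1 := by omega
        exact h (by rw [ht, mul_one])
      rw [padicValNat.eq_zero_of_not_dvd hnd]; rfl
  -- membership facts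
  have hmem : ∀ i ∈ T, ∀ j : Fin k, 1 ≤ i j ∧ i j ≤ n := by
    intro i hi j
    rw [hT, Finset.mem_filter, Fintype.mem_piFinset] at hi
    have := hi.1 j
    rw [Finset.mem_Icc] at this
    exact this
  -- positivity of terms
  have hFpos : ∀ i ∈ T, 0 < F i := by
    intro i hi
    apply Finset.prod_pos
    intro j _
    have h1 : (1 : ℚ) ≤ ((i j : ℕ) : ℚ) := by exact_mod_cast (hmem i hi j).1
    have haQ' : (0 : ℚ) < (aₘ : ℚ) := by exact_mod_cast ha.trans_lt' (by norm_num)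
    positivity
  -- valuation of each term
  have hFval : ∀ i ∈ T, padicValRat p (F i) =
      -∑ j : Fin k, (s j : ℤ) * (va + m * (if i j = p then 1 else 0)) := by
    intro i hi
    have hne : ∀ j : Fin k, (1 : ℚ) / (((aₘ : ℚ) * ((i j : ℕ) : ℚ) ^ m) ^ (s j)) ≠ 0 := by
      intro j
      have := hFpos i hi
      have h1 : (1 : ℚ) ≤ ((i j : ℕ) : ℚ) := by exact_mod_cast (hmem i hi j).1
      have haQ' : (0 : ℚ) < (aₘ : ℚ) := by exact_mod_cast ha.trans_lt' (by norm_num)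
      positivity
    rw [hF, my_prod_val _ _ (fun j _ => hne j), ← Finset.sum_neg_distrib]
    apply Finset.sum_congr rfl
    intro j _
    have hcne : ((i j : ℕ) : ℚ) ≠ 0 := by
      have h1 : (1 : ℚ) ≤ ((i j : ℕ) : ℚ) := by exact_mod_cast (hmem i hi j).1
      linarith
    have hbase : (aₘ : ℚ) * ((i j : ℕ) : ℚ) ^ m ≠ 0 := by
      exact mul_ne_zero haQ (pow_ne_zero _ hcne)
    rw [one_div, padicValRat.inv, padicValRat.pow _,
      padicValRat.mul haQ (pow_ne_zero _ hcne), padicValRat.pow _,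
      padicValRat.of_int, padicValRat.of_nat, hvnat _ (hmem i hi j).1 (hmem i hi j).2]
  -- the constant-p tuple
  set i₀ : Fin k → ℕ := fun _ => p with hi₀
  have hi₀T : i₀ ∈ T := by
    rw [hT, Finset.mem_filter, Fintype.mem_piFinset]
    refine ⟨fun j => ?_, fun a b _ => le_refl _⟩
    rw [Finset.mem_Icc]
    exact ⟨hp.one_lt.le.trans' (by norm_num), hpn⟩
  have hval₀ : padicValRat p (F i₀) = -∑ j : Fin k, (s j : ℤ) * (va + m) := by
    rw [hFval i₀ hi₀T]
    simp [hi₀]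
  -- the minimal valuation is strictly less than others
  have hlt₀ : ∀ i ∈ T, i ≠ i₀ → padicValRat p (F i₀) < padicValRat p (F i) := by
    intro i hi hne
    rw [hval₀, hFval i hi, neg_lt_neg_iff]
    obtain ⟨j₀, hj₀⟩ : ∃ j₀, i j₀ ≠ p := by
      by_contra h
      push_neg at h
      exact hne (funext h)
    apply Finset.sum_lt_sum
    · intro j _
      have hsj : (0 : ℤ) ≤ (s j : ℤ) := Int.natCast_nonneg _
      have hm' : (0 : ℤ) ≤ (m : ℤ) := Int.natCast_nonneg _
      split_ifs with h
      · rw [mul_one]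
      · nlinarith
    · refine ⟨j₀, Finset.mem_univ _, ?_⟩
      rw [if_neg hj₀, mul_zero, add_zero]
      have hsj : (1 : ℤ) ≤ (s j₀ : ℤ) := by exact_mod_cast hs j₀
      have hm' : (1 : ℤ) ≤ (m : ℤ) := by exact_mod_cast hm
      nlinarith
  have hval₀neg : padicValRat p (F i₀) < 0 := by
    rw [hval₀, neg_lt, neg_zero]
    apply Finset.sum_pos
    · intro j _
      have hsj : (1 : ℤ) ≤ (s j : ℤ) := by exact_mod_cast hs j
      have hm' : (1 : ℤ) ≤ (m : ℤ) := by exact_mod_cast hm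
      nlinarith
    · exact Finset.univ_nonempty_iff.2 (Fin.pos_iff_nonempty.1 (by omega))
  -- total sum valuation
  have hsum : HstarMono aₘ m k n s = F i₀ + ∑ i ∈ T.erase i₀, F i := by
    rw [HstarMono, ← hT, ← Finset.add_sum_erase _ _ hi₀T]
  have hvaltot : padicValRat p (HstarMono aₘ m k n s) = padicValRat p (F i₀) := by
    rw [hsum]
    rcases Finset.eq_empty_or_nonempty (T.erase i₀) with h | h
    · rw [h, Finset.sum_empty, add_zero]
    · have hR : padicValRat p (F i₀) < padicValRat p (∑ i ∈ T.erase i₀, F i) :=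
        my_lt_sum h (fun i hi => hlt₀ i (Finset.mem_of_mem_erase hi) (Finset.ne_of_mem_erase hi))
          (fun i hi => hFpos i (Finset.mem_of_mem_erase hi))
      have hRpos : 0 < ∑ i ∈ T.erase i₀, F i :=
        Finset.sum_pos (fun i hi => hFpos i (Finset.mem_of_mem_erase hi)) h
      exact padicValRat.add_eq_of_lt (by positivity) (hFpos i₀ hi₀T).ne'
        hRpos.ne' hR
  -- contradiction: an integer has nonnegative valuation
  have hnonneg : 0 ≤ padicValRat p (HstarMono aₘ m k n s) := by
    rw [hz, padicValRat.of_int]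
    exact Int.natCast_nonneg _
  rw [hvaltot] at hnonneg
  exact absurd hnonneg (not_le.2 hval₀neg)
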